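/- Suppose type θ has a type-independent utility U_θ(x,y,t) = f(x,y), all loser-best Nash equilibria of the θ-vs-θ game are efficient, and every efficient strategy pair (x̃,ỹ) has π(x̃,ỹ) ≠ π(ỹ,x̃). Define the mutant type τ by U_τ(x,y,τ) = π(x,y)+π(y,x) and U_τ(x,y,θ) = (π(x,y)+π(y,x))·1[π(x,y) ≥ π(y,x)]. Then in any Nash stable matching profile for (θ,τ,ε) under complete information: (a) any τ-τ matched pair plays an efficient strategy pair; (b) any τ-θ matched pair plays an efficient strategy pair (x*,y*) with π(x*,y*) ≥ π(y*,x*) where τ plays x*; and consequently (c) the average material payoff of type τ is at least (1/2)(π(x̃,ỹ)+π(ỹ,x̃)) ≥ the average material payoff of type θ. -/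

import Mathlib

noncomputable section
namespace Evo

open Finset

def IsMixed {X : Type*} [Fintype X] (x : X → ℝ) : Prop :=
  (∀ a, 0 ≤ x a) ∧ ∑ a, x a = 1

def payoff {X : Type*} [Fintype X] (p : X → X → ℝ) (x y : X → ℝ) : ℝ :=
  ∑ a, ∑ b, x a * y b * p a b

def totalPay {X : Type*} [Fintype X] (p : X → X → ℝ) (x y : X → ℝ) : ℝ :=
  payoff p x y + payoff p y x

def purePt {X : Type*} [DecidableEq X] (a : X) : X → ℝ := fun b => if b = a then 1 else 0

def NashEq {X : Type*} [Fintype X] (p : X → X → ℝ) (x y : X → ℝ) : Prop :=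
  IsMixed x ∧ IsMixed y ∧
    (∀ x', IsMixed x' → payoff p x' y ≤ payoff p x y) ∧
    (∀ y', IsMixed y' → payoff p y' x ≤ payoff p y x)

def Efficient {X : Type*} [Fintype X] (p : X → X → ℝ) (x y : X → ℝ) : Prop :=
  IsMixed x ∧ IsMixed y ∧
    ∀ x' y', IsMixed x' → IsMixed y' → totalPay p x' y' ≤ totalPay p x y

def LoserBest {X : Type*} [Fintype X] (p : X → X → ℝ) (x y : X → ℝ) : Prop :=
  NashEq p x y ∧ ∀ x' y', NashEq p x' y' →
    min (payoff p x' y') (payoff p y' x') ≤ min (payoff p x y) (payoff p y x)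

/-- The two preference types present in a population state. -/
inductive Ty : Type
  | θ | τ
deriving DecidableEq

/-- A matching profile (μ(ε), Σ) for a population state with fraction 1−ε of
type θ and ε of type τ, under complete information.  `μ a b` is the proportion
of type-a agents matched with type-b agents, and `σ a b` is the (pairwise
homogeneous) strategy pair played in such a match, where `(σ a b).1` is the
type-a agent's strategy. -/
structure MatchProfile (X : Type*) [Fintype X] where
  ε : ℝ
  μ : Ty → Ty → ℝ
  σ : Ty → Ty → ((X → ℝ) × (X → ℝ))
  hε0 : 0 < ε
  hε1 : ε < 1
  hμ0 : ∀ a b, 0 ≤ μ a b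
  hμθ : μ .θ .θ + μ .θ .τ = 1
  hμτ : μ .τ .τ + μ .τ .θ = 1
  hbal : (1 - ε) * μ .θ .τ = ε * μ .τ .θ
  hσ1 : ∀ a b, IsMixed (σ a b).1
  hσ2 : ∀ a b, IsMixed (σ a b).2
  hσsym1 : ∀ a b, (σ a b).1 = (σ b a).2
  hσsym2 : ∀ a b, (σ a b).2 = (σ b a).1

variable {X : Type*} [Fintype X]

/-- Internal stability: every matched pair plays a Nash equilibrium of the
subjective utility game between them.  `U a x y t` is the utility of a type-a
agent playing x against a type-t opponent playing y. -/
def InternallyStable (U : Ty → (X → ℝ) → (X → ℝ) → Ty → ℝ) (M : MatchProfile X) : Prop :=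
  ∀ a b : Ty, 0 < M.μ a b →
    (∀ x', IsMixed x' → U a x' (M.σ a b).2 b ≤ U a (M.σ a b).1 (M.σ a b).2 b) ∧
    (∀ y', IsMixed y' → U b y' (M.σ a b).1 a ≤ U b (M.σ a b).2 (M.σ a b).1 a)

/-- A blocking pair (Definition 1): positive-mass agents of types a and b
(currently matched to types c and d) agree on a Nash-equilibrium strategy pair
(x̂,ŷ) that makes both strictly better off. -/
def BlockingPair (U : Ty → (X → ℝ) → (X → ℝ) → Ty → ℝ) (M : MatchProfile X) : Prop :=
  ∃ (a b c d : Ty) (xh yh : X → ℝ),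
    IsMixed xh ∧ IsMixed yh ∧
    0 < M.μ a c ∧ 0 < M.μ b d ∧
    (∀ x', IsMixed x' → U a x' yh b ≤ U a xh yh b) ∧
    (∀ y', IsMixed y' → U b y' xh a ≤ U b yh xh a) ∧
    U a (M.σ a c).1 (M.σ a c).2 c < U a xh yh b ∧
    U b (M.σ b d).1 (M.σ b d).2 d < U b yh xh a

/-- Nash stability (Definition 2): internal and external stability. -/
def NashStable (U : Ty → (X → ℝ) → (X → ℝ) → Ty → ℝ) (M : MatchProfile X) : Prop :=
  InternallyStable U M ∧ ¬ BlockingPair U M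

/-- Average material payoff of type `a` (with `b` the other type), splitting
same-type asymmetric play equally. -/
def avgPay (p : X → X → ℝ) (M : MatchProfile X) (a b : Ty) : ℝ :=
  M.μ a a * ((payoff p (M.σ a a).1 (M.σ a a).2 + payoff p (M.σ a a).2 (M.σ a a).1) / 2)
    + M.μ a b * payoff p (M.σ a b).1 (M.σ a b).2

/-- Nash equilibrium of the θ-vs-θ game when θ's utility is the type-independent
function `f` (player 2's utility from (x,y) is `f y x`). -/
def NashEqF (f : (X → ℝ) → (X → ℝ) → ℝ) (x y : X → ℝ) : Prop :=
  IsMixed x ∧ IsMixed y ∧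
    (∀ x', IsMixed x' → f x' y ≤ f x y) ∧
    (∀ y', IsMixed y' → f y' x ≤ f y x)

/-- Loser-best Nash equilibrium of the θ-vs-θ game with utility `f`. -/
def LoserBestF (f : (X → ℝ) → (X → ℝ) → ℝ) (x y : X → ℝ) : Prop :=
  NashEqF f x y ∧ ∀ x' y', NashEqF f x' y' →
    min (f x' y') (f y' x') ≤ min (f x y) (f y x)


section Aux
variable {X : Type*} [Fintype X]

lemma totalPay_comm (p : X → X → ℝ) (x y : X → ℝ) : totalPay p x y = totalPay p y x :=
  add_comm _ _

lemma exists_pos_of_isMixed {x : X → ℝ} (hx : IsMixed x) : ∃ a, 0 < x a := by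
  have h : ∑ a : X, (0:ℝ) < ∑ a, x a := by simp [hx.2]
  obtain ⟨a, _, ha⟩ := Finset.exists_lt_of_sum_lt h
  exact ⟨a, ha⟩

lemma payoff_pos {p : X → X → ℝ} {x y : X → ℝ} (hp : ∀ s t : X, 0 < p s t)
    (hx : IsMixed x) (hy : IsMixed y) : 0 < payoff p x y := by
  obtain ⟨a, ha⟩ := exists_pos_of_isMixed hx
  obtain ⟨b, hb⟩ := exists_pos_of_isMixed hy
  have hnn : ∀ a b, 0 ≤ x a * y b * p a b := fun a b =>
    mul_nonneg (mul_nonneg (hx.1 a) (hy.1 b)) (hp a b).le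
  refine Finset.sum_pos' (fun i _ => Finset.sum_nonneg fun j _ => hnn i j) ⟨a, mem_univ a, ?_⟩
  refine Finset.sum_pos' (fun j _ => hnn a j) ⟨b, mem_univ b, ?_⟩
  exact mul_pos (mul_pos ha hb) (hp a b)

lemma mixed_mem {x : X → ℝ} (hx : IsMixed x) : x ∈ stdSimplex ℝ X := hx

lemma exists_efficient (p : X → X → ℝ) (hne : ∃ x : X → ℝ, IsMixed x) :
    ∃ xe ye : X → ℝ, IsMixed xe ∧ IsMixed ye ∧
      ∀ x' y', IsMixed x' → IsMixed y' → totalPay p x' y' ≤ totalPay p xe ye := by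
  obtain ⟨z, hz⟩ := hne
  have hc : IsCompact ((stdSimplex ℝ X) ×ˢ (stdSimplex ℝ X)) :=
    (isCompact_stdSimplex (𝕜 := ℝ) (ι := X)).prod (isCompact_stdSimplex (𝕜 := ℝ) (ι := X))
  have hcont : Continuous fun q : (X → ℝ) × (X → ℝ) => totalPay p q.1 q.2 := by
    unfold totalPay payoff; fun_prop
  obtain ⟨q, hq, hmax⟩ := hc.exists_isMaxOn ⟨(z, z), Set.mem_prod.mpr ⟨mixed_mem hz, mixed_mem hz⟩⟩
    hcont.continuousOn
  have hq1 : IsMixed q.1 := (Set.mem_prod.mp hq).1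
  have hq2 : IsMixed q.2 := (Set.mem_prod.mp hq).2
  refine ⟨q.1, q.2, hq1, hq2, fun x' y' hx' hy' => ?_⟩
  exact @hmax (x', y') (Set.mem_prod.mpr ⟨mixed_mem hx', mixed_mem hy'⟩)

end Aux

open Classical in
/-- core of the proof of Proposition 2(ii): with θ a
type-independent type `f` whose loser-best same-type equilibria are all
efficient, all efficient pairs asymmetric in π, and the mutant τ defined by
U_τ(x,y,τ) = π(x,y)+π(y,x) and U_τ(x,y,θ) = (π(x,y)+π(y,x))·1[π(x,y) ≥ π(y,x)],
in any Nash stable matching profile: (a) matched τ-τ pairs play efficiently,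
(b) matched τ-θ pairs play an efficient pair with τ on the weakly advantageous
side, and (c) τ's average material payoff is at least half the efficient total,
which is at least θ's average material payoff. -/
theorem mutant_dominates_type_independent
    (p : X → X → ℝ) (hp : ∀ s t : X, 0 < p s t)
    (f : (X → ℝ) → (X → ℝ) → ℝ)
    (hLB : ∀ x y, LoserBestF f x y → Efficient p x y)
    (hasym : ∀ x y, Efficient p x y → payoff p x y ≠ payoff p y x)
    (U : Ty → (X → ℝ) → (X → ℝ) → Ty → ℝ)
    (hUθ : ∀ x y t, U .θ x y t = f x y)
    (hUττ : ∀ x y, U .τ x y .τ = totalPay p x y)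
    (hUτθ : ∀ x y, U .τ x y .θ =
      totalPay p x y * (if payoff p y x ≤ payoff p x y then 1 else 0))
    (M : MatchProfile X) (hstable : NashStable U M) :
    (0 < M.μ .τ .τ → Efficient p (M.σ .τ .τ).1 (M.σ .τ .τ).2) ∧
    (0 < M.μ .τ .θ → Efficient p (M.σ .τ .θ).1 (M.σ .τ .θ).2 ∧
      payoff p (M.σ .τ .θ).2 (M.σ .τ .θ).1 ≤ payoff p (M.σ .τ .θ).1 (M.σ .τ .θ).2) ∧
    (∀ xt yt, Efficient p xt yt →
      totalPay p xt yt / 2 ≤ avgPay p M .τ .θ ∧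
      avgPay p M .θ .τ ≤ totalPay p xt yt / 2) := by
  obtain ⟨hint, hblock⟩ := hstable
  obtain ⟨xe, ye, hxe, hye, hmax⟩ := exists_efficient p ⟨(M.σ .τ .τ).1, M.hσ1 .τ .τ⟩
  set V := totalPay p xe ye with hV
  have hVpos : 0 < V := add_pos (payoff_pos hp hxe hye) (payoff_pos hp hye hxe)
  have hBR1 : ∀ x', IsMixed x' → U .τ x' ye .τ ≤ U .τ xe ye .τ := by
    intro x' hx'; rw [hUττ, hUττ]; exact hmax x' ye hx' hye
  have hBR2 : ∀ y', IsMixed y' → U .τ y' xe .τ ≤ U .τ ye xe .τ := by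
    intro y' hy'; rw [hUττ, hUττ, totalPay_comm p ye xe]; exact hmax y' xe hy' hxe
  have hUeq : U .τ xe ye .τ = V := hUττ xe ye
  have hUeq' : U .τ ye xe .τ = V := by rw [hUττ, totalPay_comm]
  have parta : 0 < M.μ .τ .τ → Efficient p (M.σ .τ .τ).1 (M.σ .τ .τ).2 := by
    intro hμ
    by_contra hne
    have hlt : totalPay p (M.σ .τ .τ).1 (M.σ .τ .τ).2 < V := by
      have hC : ¬ ∀ x' y', IsMixed x' → IsMixed y' →
          totalPay p x' y' ≤ totalPay p (M.σ .τ .τ).1 (M.σ .τ .τ).2 :=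
        fun hC => hne ⟨M.hσ1 .τ .τ, M.hσ2 .τ .τ, hC⟩
      push_neg at hC
      obtain ⟨x', y', hx', hy', hlt⟩ := hC
      exact hlt.trans_le (hmax x' y' hx' hy')
    exact hblock ⟨.τ, .τ, .τ, .τ, xe, ye, hxe, hye, hμ, hμ, hBR1, hBR2,
      by rw [hUττ, hUeq]; exact hlt, by rw [hUττ, hUeq']; exact hlt⟩
  have partb : 0 < M.μ .τ .θ → Efficient p (M.σ .τ .θ).1 (M.σ .τ .θ).2 ∧
      payoff p (M.σ .τ .θ).2 (M.σ .τ .θ).1 ≤ payoff p (M.σ .τ .θ).1 (M.σ .τ .θ).2 := by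
    intro hμ
    by_contra hcon
    have hlt : U .τ (M.σ .τ .θ).1 (M.σ .τ .θ).2 .θ < V := by
      rw [hUτθ]
      by_cases hord : payoff p (M.σ .τ .θ).2 (M.σ .τ .θ).1 ≤
          payoff p (M.σ .τ .θ).1 (M.σ .τ .θ).2
      · rw [if_pos hord, mul_one]
        have hne : ¬ Efficient p (M.σ .τ .θ).1 (M.σ .τ .θ).2 := fun h => hcon ⟨h, hord⟩
        have hC : ¬ ∀ x' y', IsMixed x' → IsMixed y' →
            totalPay p x' y' ≤ totalPay p (M.σ .τ .θ).1 (M.σ .τ .θ).2 :=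
          fun hC => hne ⟨M.hσ1 .τ .θ, M.hσ2 .τ .θ, hC⟩
        push_neg at hC
        obtain ⟨x', y', hx', hy', hlt⟩ := hC
        exact hlt.trans_le (hmax x' y' hx' hy')
      · rw [if_neg hord, mul_zero]; exact hVpos
    exact hblock ⟨.τ, .τ, .θ, .θ, xe, ye, hxe, hye, hμ, hμ, hBR1, hBR2,
      by rw [hUeq]; exact hlt, by rw [hUeq']; exact hlt⟩
  refine ⟨parta, partb, fun xt yt heff => ?_⟩
  have hWV : totalPay p xt yt = V :=
    le_antisymm (hmax xt yt heff.1 heff.2.1) (heff.2.2 xe ye hxe hye)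
  have eff_total : ∀ u v : X → ℝ, Efficient p u v → payoff p u v + payoff p v u = V :=
    fun u v h => le_antisymm (hmax u v h.1 h.2.1) (h.2.2 xe ye hxe hye)
  constructor
  · -- lower bound for τ
    have h1 : M.μ .τ .τ * (V / 2) ≤
        M.μ .τ .τ * ((payoff p (M.σ .τ .τ).1 (M.σ .τ .τ).2
          + payoff p (M.σ .τ .τ).2 (M.σ .τ .τ).1) / 2) := by
      rcases eq_or_lt_of_le (M.hμ0 .τ .τ) with h | h
      · rw [← h]; simp
      · rw [eff_total _ _ (parta h)]
    have h2 : M.μ .τ .θ * (V / 2) ≤ M.μ .τ .θ * payoff p (M.σ .τ .θ).1 (M.σ .τ .θ).2 := by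
      rcases eq_or_lt_of_le (M.hμ0 .τ .θ) with h | h
      · rw [← h]; simp
      · obtain ⟨heffτθ, hord⟩ := partb h
        have htot := eff_total _ _ heffτθ
        have hhalf : V / 2 ≤ payoff p (M.σ .τ .θ).1 (M.σ .τ .θ).2 := by linarith
        exact mul_le_mul_of_nonneg_left hhalf h.le
    have hsum : totalPay p xt yt / 2 = M.μ .τ .τ * (V / 2) + M.μ .τ .θ * (V / 2) := by
      rw [hWV, ← add_mul, M.hμτ, one_mul]
    rw [hsum]
    unfold avgPay
    exact add_le_add h1 h2
  · -- upper bound for θ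
    have h1 : M.μ .θ .θ * ((payoff p (M.σ .θ .θ).1 (M.σ .θ .θ).2
        + payoff p (M.σ .θ .θ).2 (M.σ .θ .θ).1) / 2) ≤ M.μ .θ .θ * (V / 2) := by
      have htot : payoff p (M.σ .θ .θ).1 (M.σ .θ .θ).2
          + payoff p (M.σ .θ .θ).2 (M.σ .θ .θ).1 ≤ V :=
        hmax _ _ (M.hσ1 .θ .θ) (M.hσ2 .θ .θ)
      exact mul_le_mul_of_nonneg_left (by linarith) (M.hμ0 .θ .θ)
    have h2 : M.μ .θ .τ * payoff p (M.σ .θ .τ).1 (M.σ .θ .τ).2 ≤ M.μ .θ .τ * (V / 2) := by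
      rcases eq_or_lt_of_le (M.hμ0 .θ .τ) with h | h
      · rw [← h]; simp
      · have hpos : 0 < M.ε * M.μ .τ .θ := by
          rw [← M.hbal]; exact mul_pos (by linarith [M.hε1]) h
        have hμτθ : 0 < M.μ .τ .θ := by
          rcases mul_pos_iff.mp hpos with ⟨_, h2⟩ | ⟨h2, _⟩
          · exact h2
          · linarith [M.hε0]
        obtain ⟨heffτθ, hord⟩ := partb hμτθ
        have htot := eff_total _ _ heffτθ
        have hhalf : payoff p (M.σ .θ .τ).1 (M.σ .θ .τ).2 ≤ V / 2 := by
          rw [M.hσsym1 .θ .τ, M.hσsym2 .θ .τ]; linarith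
        exact mul_le_mul_of_nonneg_left hhalf h.le
    have hsum : totalPay p xt yt / 2 = M.μ .θ .θ * (V / 2) + M.μ .θ .τ * (V / 2) := by
      rw [hWV, ← add_mul, M.hμθ, one_mul]
    rw [hsum]
    unfold avgPay
    exact add_le_add h1 h2

end Evo
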